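/- Let π be a faithful unitary representation of G of finite degree, and let (Γ,Ψ) be a G-gain graph. Then (Γ,Ψ) is balanced if and only if Tr((A_π)^h) = Tr((|A|_π)^h) for all h ∈ ℕ, where A_π and |A|_π are the represented adjacency matrices of (Γ,Ψ) and of (Γ,1_G) (all gains trivial) at π. -/

import Mathlib

open scoped Kronecker
open Matrix Polynomial Filter

namespace GainPaper

variable {G : Type*} [Group G]

/-- The gain of a walk: product of the gains of its darts. -/
def walkGain {n : ℕ} {Γ : SimpleGraph (Fin n)} {M : Type*} [Monoid M]
    (Ψ : Fin n → Fin n → M) {u v : Fin n} (p : Γ.Walk u v) : M :=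
  (p.darts.map fun d => Ψ d.toProd.1 d.toProd.2).prod

/-- `Ψ` is a gain function on `Γ`: the gain of an edge in the reverse
orientation is the inverse of its gain. -/
def IsGain {n : ℕ} (Γ : SimpleGraph (Fin n)) (Ψ : Fin n → Fin n → G) : Prop :=
  ∀ i j, Γ.Adj i j → Ψ j i = (Ψ i j)⁻¹

/-- A gain graph is balanced if every closed walk has gain `1`. -/
def IsBalanced {n : ℕ} (Γ : SimpleGraph (Fin n)) {M : Type*} [Monoid M]
    (Ψ : Fin n → Fin n → M) : Prop :=
  ∀ (v : Fin n) (p : Γ.Walk v v), walkGain Ψ p = 1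

/-- The adjacency matrix of a gain graph, with entries in the group algebra ℂG. -/
noncomputable def gainAdj {n : ℕ} (Γ : SimpleGraph (Fin n)) [DecidableRel Γ.Adj]
    (Ψ : Fin n → Fin n → G) : Matrix (Fin n) (Fin n) (MonoidAlgebra ℂ G) :=
  Matrix.of fun i j => if Γ.Adj i j then MonoidAlgebra.single (Ψ i j) 1 else 0

/-- The involution on ℂG: `(Σ f_x x)* = Σ conj(f_x) x⁻¹`. -/
noncomputable def starCG (f : MonoidAlgebra ℂ G) : MonoidAlgebra ℂ G :=
  f.coeff.sum fun x c => MonoidAlgebra.single x⁻¹ (starRingEnd ℂ c)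

/-- The involution on M_n(ℂG): `(F*)_{i,j} = (F_{j,i})*`. -/
noncomputable def starM {n : ℕ} (F : Matrix (Fin n) (Fin n) (MonoidAlgebra ℂ G)) :
    Matrix (Fin n) (Fin n) (MonoidAlgebra ℂ G) :=
  Matrix.of fun i j => starCG (F j i)

/-- The trace on M_n(ℂG): sum over the diagonal of the coefficients of `1_G`. -/
noncomputable def trCG {n : ℕ} (F : Matrix (Fin n) (Fin n) (MonoidAlgebra ℂ G)) : ℂ :=
  ∑ i, (F i i).coeff 1

/-- The Fourier transform of `f ∈ ℂG` at `π`: `Σ_x f(x) π(x)`. -/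
noncomputable def fourier {m : Type*} (f : MonoidAlgebra ℂ G) (π : G → Matrix m m ℂ) :
    Matrix m m ℂ :=
  f.coeff.sum fun x c => c • π x

/-- The (finite) set of group elements appearing in some entry of `F`. -/
noncomputable def matSupport {n : ℕ} (F : Matrix (Fin n) (Fin n) (MonoidAlgebra ℂ G)) :
    Finset G :=
  letI := Classical.decEq G
  Finset.univ.biUnion fun i : Fin n => Finset.univ.biUnion fun j : Fin n => (F i j).coeff.support

/-- `F(x)`: the complex matrix of coefficients of `x` in the entries of `F`. -/
def matCoeff {n : ℕ} (F : Matrix (Fin n) (Fin n) (MonoidAlgebra ℂ G)) (x : G) :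
    Matrix (Fin n) (Fin n) ℂ :=
  Matrix.of fun i j => (F i j).coeff x

/-- Fourier transform of `F ∈ M_n(ℂG)` at `π`: `F̂(π) = Σ_{x∈G} F(x) ⊗ π(x)`. -/
noncomputable def fourierM {n : ℕ} {m : Type*} (F : Matrix (Fin n) (Fin n) (MonoidAlgebra ℂ G))
    (π : G → Matrix m m ℂ) : Matrix (Fin n × m) (Fin n × m) ℂ :=
  ∑ x ∈ matSupport F, matCoeff F x ⊗ₖ π x

/-- A representation is unitary if each `π g` is a unitary matrix. -/
def IsUnitaryRep {m : Type*} [Fintype m] [DecidableEq m] (π : G →* Matrix m m ℂ) : Prop :=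
  ∀ g, π g ∈ Matrix.unitaryGroup m ℂ

/-- Irreducibility: the space is nonzero and has no nontrivial invariant subspace. -/
def IsIrred {m : Type*} [Fintype m] [DecidableEq m] (π : G →* Matrix m m ℂ) : Prop :=
  Nonempty m ∧
    ∀ W : Submodule ℂ (m → ℂ), (∀ g, ∀ v ∈ W, (π g).mulVec v ∈ W) → W = ⊥ ∨ W = ⊤

/-- Equivalence of two matrix representations: an invertible intertwiner. -/
def RepEquiv {m m' : Type*} [Fintype m] [DecidableEq m] [Fintype m'] [DecidableEq m']
    (π : G →* Matrix m m ℂ) (π' : G →* Matrix m' m' ℂ) : Prop :=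
  ∃ e : (m → ℂ) ≃ₗ[ℂ] (m' → ℂ), ∀ g v, e ((π g).mulVec v) = (π' g).mulVec (e v)

/-- λ₁: the largest real root of the characteristic polynomial
(= the largest eigenvalue, for a Hermitian matrix). -/
noncomputable def lam1 {m : Type*} [Fintype m] [DecidableEq m] (M : Matrix m m ℂ) : ℝ :=
  sSup {x : ℝ | M.charpoly.IsRoot (x : ℂ)}

/-- Spectral radius: the sup of the absolute values of the eigenvalues. -/
noncomputable def specRad {m : Type*} [Fintype m] [DecidableEq m] (M : Matrix m m ℂ) : ℝ :=
  sSup {r : ℝ | ∃ μ : ℂ, M.charpoly.IsRoot μ ∧ r = ‖μ‖}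

/-- Adjacency relation of the cover graph on `V × G`:
`(u,g) ∼ (v,h)` iff `u ∼ v` and `h = Ψ(u,v)⁻¹ g`. -/
def coverAdj {n : ℕ} (Γ : SimpleGraph (Fin n)) (Ψ : Fin n → Fin n → G) (p q : Fin n × G) :
    Prop :=
  Γ.Adj p.1 q.1 ∧ q.2 = (Ψ p.1 q.1)⁻¹ * p.2

/-- The {0,1} adjacency matrix of the cover graph. -/
noncomputable def coverMatrix {n : ℕ} [DecidableEq G] (Γ : SimpleGraph (Fin n))
    [DecidableRel Γ.Adj] (Ψ : Fin n → Fin n → G) : Matrix (Fin n × G) (Fin n × G) ℂ :=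
  Matrix.of fun p q => if Γ.Adj p.1 q.1 ∧ q.2 = (Ψ p.1 q.1)⁻¹ * p.2 then 1 else 0

/-- The left regular representation, as matrices:
`λ_G(g)_{r,p} = 1` if `g = r p⁻¹`, else `0`. -/
noncomputable def lamG [DecidableEq G] : G → Matrix G G ℂ :=
  fun g => Matrix.of fun r p => if g = r * p⁻¹ then 1 else 0



section Auxiliary

variable {n k : ℕ}

/-- The block form of the represented adjacency matrix. -/
noncomputable def blockC (Γ : SimpleGraph (Fin n)) [DecidableRel Γ.Adj]
    (Ψ : Fin n → Fin n → G) (π : G →* Matrix (Fin k) (Fin k) ℂ) :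
    Matrix (Fin n) (Fin n) (Matrix (Fin k) (Fin k) ℂ) :=
  Matrix.of fun i j => if Γ.Adj i j then π (Ψ i j) else 0

lemma fourierM_gainAdj (Γ : SimpleGraph (Fin n)) [DecidableRel Γ.Adj]
    (Ψ : Fin n → Fin n → G) (π : G →* Matrix (Fin k) (Fin k) ℂ) :
    fourierM (gainAdj Γ Ψ) ⇑π
      = Matrix.compRingEquiv (Fin n) (Fin k) ℂ (blockC Γ Ψ π) := by
  classical
  ext ⟨i, s⟩ ⟨j, t⟩
  have hsum : fourierM (gainAdj Γ Ψ) ⇑π (i, s) (j, t)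
      = ∑ x ∈ matSupport (gainAdj Γ Ψ), (gainAdj Γ Ψ i j).coeff x * π x s t := by
    simp [fourierM, Matrix.sum_apply, matCoeff]
  rw [hsum]
  by_cases hadj : Γ.Adj i j
  · have hmem : Ψ i j ∈ matSupport (gainAdj Γ Ψ) := by
      classical
      refine Finset.mem_biUnion.2 ⟨i, Finset.mem_univ _, ?_⟩
      refine Finset.mem_biUnion.2 ⟨j, Finset.mem_univ _, ?_⟩
      simp [gainAdj, hadj, MonoidAlgebra.coeff_single, Finsupp.single_apply]
    have : ∀ x ∈ matSupport (gainAdj Γ Ψ),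
        (gainAdj Γ Ψ i j).coeff x * π x s t = if x = Ψ i j then π (Ψ i j) s t else 0 := by
      intro x hx
      simp only [gainAdj, Matrix.of_apply, if_pos hadj, MonoidAlgebra.coeff_single,
        Finsupp.single_apply]
      by_cases hx' : x = Ψ i j
      · simp [hx']
      · simp [hx', Ne.symm hx']
    rw [Finset.sum_congr rfl this, Finset.sum_ite_eq' _ _ (fun _ => π (Ψ i j) s t), if_pos hmem]
    simp [blockC, hadj, Matrix.compRingEquiv]
  · have : ∀ x ∈ matSupport (gainAdj Γ Ψ), (gainAdj Γ Ψ i j).coeff x * π x s t = 0 := by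
      intro x hx
      simp [gainAdj, hadj]
    rw [Finset.sum_congr rfl this, Finset.sum_const_zero]
    simp [blockC, hadj, Matrix.compRingEquiv]

lemma trace_compRingEquiv (M : Matrix (Fin n) (Fin n) (Matrix (Fin k) (Fin k) ℂ)) :
    (Matrix.compRingEquiv (Fin n) (Fin k) ℂ M).trace = ∑ i, (M i i).trace := by
  simp only [Matrix.trace, Matrix.diag, Matrix.compRingEquiv, Matrix.compAddEquiv, Matrix.comp]
  rw [Fintype.sum_prod_type]
  rfl

lemma walkGain_cons {Γ : SimpleGraph (Fin n)} {M : Type*} [Monoid M]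
    (Ψ : Fin n → Fin n → M) {u w v : Fin n} (h : Γ.Adj u w) (p : Γ.Walk w v) :
    walkGain Ψ (SimpleGraph.Walk.cons h p) = Ψ u w * walkGain Ψ p := by
  simp [walkGain]

lemma walkGain_triv {Γ : SimpleGraph (Fin n)} {u v : Fin n} (p : Γ.Walk u v) :
    walkGain (fun _ _ => (1 : G)) p = 1 := by
  simp [walkGain]

lemma blockC_pow_apply (Γ : SimpleGraph (Fin n)) [DecidableRel Γ.Adj]
    (Ψ : Fin n → Fin n → G) (π : G →* Matrix (Fin k) (Fin k) ℂ) (h : ℕ) (u v : Fin n) :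
    (blockC Γ Ψ π ^ h) u v
      = ∑ p ∈ Γ.finsetWalkLength h u v, π (walkGain Ψ p) := by
  classical
  induction h generalizing u v with
  | zero =>
    obtain rfl | huv := eq_or_ne u v
    · simp [SimpleGraph.finsetWalkLength, walkGain, Matrix.one_apply]
    · simp [SimpleGraph.finsetWalkLength, huv, Matrix.one_apply]
  | succ h ih =>
    rw [pow_succ']
    rw [Matrix.mul_apply]
    have hdisj : ∀ w₁ ∈ (Finset.univ : Finset (Γ.neighborSet u)), ∀ w₂ ∈ Finset.univ,
        w₁ ≠ w₂ → Disjoint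
          ((Γ.finsetWalkLength h w₁ v).map
            ⟨fun p => SimpleGraph.Walk.cons w₁.property p, fun _ _ h => by cases h; rfl⟩)
          ((Γ.finsetWalkLength h w₂ v).map
            ⟨fun p => SimpleGraph.Walk.cons w₂.property p, fun _ _ h => by cases h; rfl⟩) := by
      rintro ⟨x, hx⟩ - ⟨y, hy⟩ - hxy
      rw [disjoint_iff_inf_le]
      intro p hp
      simp only [Finset.inf_eq_inter, Finset.mem_inter, Finset.mem_map,
        Function.Embedding.coeFn_mk] at hp
      obtain ⟨⟨px, _, rfl⟩, ⟨py, hpy, hp⟩⟩ := hp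
      cases hp
      simp at hxy
    rw [show Γ.finsetWalkLength (h+1) u v = Finset.univ.biUnion fun (w : Γ.neighborSet u) =>
        (Γ.finsetWalkLength h w v).map
          ⟨fun p => SimpleGraph.Walk.cons w.property p, fun _ _ h => by cases h; rfl⟩ from rfl,
      Finset.sum_biUnion ?_]
    swap
    · exact fun w₁ _ w₂ _ hne => hdisj w₁ (Finset.mem_univ _) w₂ (Finset.mem_univ _) hne
    have hstep : ∀ w : Γ.neighborSet u,
        (∑ p ∈ (Γ.finsetWalkLength h (w : Fin n) v).map
            ⟨fun p => SimpleGraph.Walk.cons w.property p, fun _ _ h => by cases h; rfl⟩,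
          π (walkGain Ψ p))
        = π (Ψ u w) * ∑ p ∈ Γ.finsetWalkLength h (w : Fin n) v, π (walkGain Ψ p) := by
      intro w
      rw [Finset.sum_map, Finset.mul_sum]
      refine Finset.sum_congr rfl fun p _ => ?_
      exact (congrArg π (walkGain_cons Ψ w.property p)).trans (_root_.map_mul π _ _)
    rw [Finset.sum_congr rfl fun w _ => hstep w]
    rw [Finset.sum_set_coe (s := Γ.neighborSet u)
      (f := fun w => π (Ψ u w) * ∑ p ∈ Γ.finsetWalkLength h w v, π (walkGain Ψ p))]
    rw [show (Γ.neighborSet u).toFinset = Finset.univ.filter (Γ.Adj u) from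
      Γ.neighborFinset_eq_filter]
    rw [Finset.sum_filter]
    refine Finset.sum_congr rfl fun j _ => ?_
    by_cases hadj : Γ.Adj u j
    · rw [if_pos hadj, show blockC Γ Ψ π u j = π (Ψ u j) from by simp [blockC, hadj], ih]
    · rw [if_neg hadj, show blockC Γ Ψ π u j = 0 from by simp [blockC, hadj], zero_mul]

lemma trace_fourierM_pow (Γ : SimpleGraph (Fin n)) [DecidableRel Γ.Adj]
    (Ψ : Fin n → Fin n → G) (π : G →* Matrix (Fin k) (Fin k) ℂ) (h : ℕ) :
    (fourierM (gainAdj Γ Ψ) ⇑π ^ h).trace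
      = ∑ u, ∑ p ∈ Γ.finsetWalkLength h u u, (π (walkGain Ψ p)).trace := by
  rw [fourierM_gainAdj, ← map_pow, trace_compRingEquiv]
  refine Finset.sum_congr rfl fun u _ => ?_
  rw [blockC_pow_apply, Matrix.trace_sum]

lemma unitary_row (U : Matrix (Fin k) (Fin k) ℂ)
    (hU : U ∈ Matrix.unitaryGroup (Fin k) ℂ) (i : Fin k) :
    ∑ j, Complex.normSq (U i j) = 1 := by
  have h1 : U * star U = 1 := Matrix.mem_unitaryGroup_iff.mp hU
  have h2 := congrFun (congrFun (congrArg (fun M => (M : Matrix (Fin k) (Fin k) ℂ)) h1) i) i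
  simp only [Matrix.mul_apply, Matrix.one_apply_eq, Matrix.star_apply,
    Matrix.conjTranspose_apply] at h2
  have h3 : (↑(∑ j, Complex.normSq (U i j)) : ℂ) = 1 := by
    push_cast
    rw [← h2]
    exact Finset.sum_congr rfl fun j _ => (Complex.mul_conj (U i j)).symm
  exact_mod_cast h3

lemma unitary_diag_re_le (U : Matrix (Fin k) (Fin k) ℂ)
    (hU : U ∈ Matrix.unitaryGroup (Fin k) ℂ) (i : Fin k) : (U i i).re ≤ 1 := by
  have hrow := unitary_row U hU i
  have hns : Complex.normSq (U i i) ≤ 1 := by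
    rw [← hrow]
    exact Finset.single_le_sum (fun j _ => Complex.normSq_nonneg _) (Finset.mem_univ i)
  have habs : ‖U i i‖ ≤ 1 := by
    have h2 : ‖U i i‖^2 ≤ 1 := by rw [Complex.sq_norm]; exact hns
    nlinarith [norm_nonneg (U i i)]
  exact le_trans (Complex.re_le_norm _) habs

lemma unitary_trace_re_le (U : Matrix (Fin k) (Fin k) ℂ)
    (hU : U ∈ Matrix.unitaryGroup (Fin k) ℂ) : (Matrix.trace U).re ≤ k := by
  rw [Matrix.trace, Complex.re_sum]
  calc ∑ i, (U i i).re ≤ ∑ _i : Fin k, (1:ℝ) :=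
        Finset.sum_le_sum fun i _ => unitary_diag_re_le U hU i
    _ = k := by simp

lemma unitary_trace_re_eq (U : Matrix (Fin k) (Fin k) ℂ)
    (hU : U ∈ Matrix.unitaryGroup (Fin k) ℂ) (htr : (Matrix.trace U).re = k) : U = 1 := by
  have hsum : ∑ i, (U i i).re = ∑ _i : Fin k, (1:ℝ) := by
    rw [← Complex.re_sum]
    simpa [Matrix.trace] using htr
  have hdiag_re : ∀ i, (U i i).re = 1 := fun i =>
    (Finset.sum_eq_sum_iff_of_le
      (fun i _ => unitary_diag_re_le U hU i)).mp hsum i (Finset.mem_univ i)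
  have hdiag : ∀ i, U i i = 1 := by
    intro i
    have hrow := unitary_row U hU i
    have hns : Complex.normSq (U i i) ≤ 1 := by
      rw [← hrow]
      exact Finset.single_le_sum (fun j _ => Complex.normSq_nonneg _) (Finset.mem_univ i)
    have him : (U i i).im = 0 := by
      have := Complex.normSq_apply (U i i)
      nlinarith [hdiag_re i]
    exact Complex.ext (by simp [hdiag_re i]) (by simp [him])
  ext i j
  by_cases hij : i = j
  · subst hij; simp [hdiag i]
  · have hrow := unitary_row U hU i
    have hsplit : Complex.normSq (U i i) + ∑ l ∈ Finset.univ.erase i, Complex.normSq (U i l)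
        = 1 := (Finset.add_sum_erase Finset.univ (fun l => Complex.normSq (U i l))
          (Finset.mem_univ i)).trans hrow
    have hz : ∑ l ∈ Finset.univ.erase i, Complex.normSq (U i l) = 0 := by
      rw [hdiag i] at hsplit; simpa using hsplit
    have hjz : Complex.normSq (U i j) = 0 :=
      (Finset.sum_eq_zero_iff_of_nonneg
        (fun l _ => Complex.normSq_nonneg (U i l))).mp hz j
        (Finset.mem_erase.2 ⟨Ne.symm hij, Finset.mem_univ j⟩)
    rw [Matrix.one_apply_ne hij]
    exact Complex.normSq_eq_zero.mp hjz

end Auxiliary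

/-- for a faithful unitary representation, balance is equivalent to
equality of the traces of all powers of the represented adjacency matrices. -/
theorem statement10 {G : Type*} [Group G] {n k : ℕ} (Γ : SimpleGraph (Fin n))
    [DecidableRel Γ.Adj] (Ψ : Fin n → Fin n → G) (hΨ : IsGain Γ Ψ)
    (π : G →* Matrix (Fin k) (Fin k) ℂ) (hU : IsUnitaryRep π)
    (hfaith : Function.Injective ⇑π) :
    IsBalanced Γ Ψ ↔
      ∀ h : ℕ, (fourierM (gainAdj Γ Ψ) ⇑π ^ h).trace =
        (fourierM (gainAdj Γ (fun _ _ => 1)) ⇑π ^ h).trace := by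
  constructor
  · intro hbal h
    rw [trace_fourierM_pow, trace_fourierM_pow]
    refine Finset.sum_congr rfl fun u _ => Finset.sum_congr rfl fun p _ => ?_
    rw [hbal u p, walkGain_triv]
  · intro htr v p
    have hk := htr p.length
    rw [trace_fourierM_pow, trace_fourierM_pow] at hk
    have hR : ∑ u, ∑ q ∈ Γ.finsetWalkLength p.length u u,
          (π (walkGain (fun _ _ => (1:G)) q)).trace
        = ∑ u, ∑ _q ∈ Γ.finsetWalkLength p.length u u, (k : ℂ) :=
      Finset.sum_congr rfl fun u _ => Finset.sum_congr rfl fun q _ => by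
        rw [walkGain_triv, _root_.map_one, Matrix.trace_one]
        simp
    rw [hR] at hk
    have hre := congrArg Complex.re hk
    simp only [Complex.re_sum, Complex.natCast_re] at hre
    have hle : ∀ u : Fin n, ∀ q ∈ Γ.finsetWalkLength p.length u u,
        ((π (walkGain Ψ q)).trace).re ≤ (k : ℝ) :=
      fun u q _ => unitary_trace_re_le _ (hU _)
    have houter := (Finset.sum_eq_sum_iff_of_le
      (fun u _ => Finset.sum_le_sum (fun q hq => hle u q hq))).mp hre v (Finset.mem_univ v)
    have hinner := (Finset.sum_eq_sum_iff_of_le (fun q hq => hle v q hq)).mp houter p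
      (SimpleGraph.mem_finsetWalkLength_iff.mpr rfl)
    have hid : π (walkGain Ψ p) = 1 := unitary_trace_re_eq _ (hU _) hinner
    exact hfaith (show π (walkGain Ψ p) = π 1 by rw [hid, _root_.map_one])


end GainPaper
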